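/- Let (d_k)_{k≥1} be positive reals with c_ℓ k^{−β} ≤ d_k ≤ c_h k^{−β} for some β > 1 and c_ℓ, c_h > 0. Define the effective dimension N(t) = ∑_k d_k/(t + d_k) for t > 0. Then N(t) = Θ(t^{−1/β}) as t → 0⁺, i.e., there exist constants a, b > 0 and t₀ > 0 such that a·t^{−1/β} ≤ N(t) ≤ b·t^{−1/β} for all 0 < t < t₀. -/

import Mathlib

open Finset

/-- MVT step: `y^{-β} ≤ 2^β/(β-1) * (y^{1-β} - (y+1)^{1-β})` for `y ≥ 1`. -/
lemma rpow_tail_step {β : ℝ} (hβ : 1 < β) {y : ℝ} (hy : 1 ≤ y) :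
    y ^ (-β) ≤ 2 ^ β / (β - 1) * (y ^ (1 - β) - (y + 1) ^ (1 - β)) := by
  have hy0 : 0 < y := lt_of_lt_of_le one_pos hy
  have hlt : y < y + 1 := by linarith
  have hcont : ContinuousOn (fun x : ℝ => x ^ (1 - β)) (Set.Icc y (y + 1)) := by
    intro x hx
    exact (Real.continuousAt_rpow_const x _ (Or.inl (by
      have : (0:ℝ) < x := lt_of_lt_of_le hy0 hx.1
      exact this.ne'))).continuousWithinAt
  have hder : ∀ x ∈ Set.Ioo y (y + 1),
      HasDerivAt (fun x : ℝ => x ^ (1 - β)) ((1 - β) * x ^ (1 - β - 1)) x := by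
    intro x hx
    exact Real.hasDerivAt_rpow_const (Or.inl (lt_trans hy0 hx.1).ne')
  obtain ⟨c, hc, hceq⟩ := exists_hasDerivAt_eq_slope (fun x : ℝ => x ^ (1 - β))
    (fun x => (1 - β) * x ^ (1 - β - 1)) hlt hcont hder
  have hc0 : 0 < c := lt_trans hy0 hc.1
  have hceq' : (1 - β) * c ^ (-β) = (y + 1) ^ (1 - β) - y ^ (1 - β) := by
    have : 1 - β - 1 = -β := by ring
    rw [this] at hceq
    rw [hceq]; field_simp; ring
  have hkey : y ^ (1 - β) - (y + 1) ^ (1 - β) = (β - 1) * c ^ (-β) := by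
    nlinarith [hceq']
  have hcb : c ^ (-β) ≥ (2 * y) ^ (-β) := by
    apply Real.rpow_le_rpow_of_nonpos hc0 (by nlinarith [hc.2]) (by linarith)
  have h2y : (2 * y) ^ (-β) = 2 ^ (-β) * y ^ (-β) :=
    Real.mul_rpow (by norm_num) (le_of_lt hy0)
  have h2 : (2:ℝ) ^ β * 2 ^ (-β) = 1 := by
    rw [← Real.rpow_add (by norm_num)]; simp
  rw [hkey]
  have hb1 : 0 < β - 1 := by linarith
  rw [div_mul_eq_mul_div, le_div_iff₀ hb1]
  calc y ^ (-β) * (β - 1) = (β - 1) * (2 ^ β * (2 ^ (-β) * y ^ (-β))) := by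
        linear_combination (-(β - 1) * y ^ (-β)) * h2
    _ ≤ (β - 1) * (2 ^ β * c ^ (-β)) := by
        apply mul_le_mul_of_nonneg_left _ (le_of_lt hb1)
        apply mul_le_mul_of_nonneg_left _ (Real.rpow_nonneg (by norm_num) _)
        rw [← h2y]; exact hcb
    _ = 2 ^ β * ((β - 1) * c ^ (-β)) := by ring

lemma summable_shift {β : ℝ} (hβ : 1 < β) (K : ℕ) :
    Summable (fun n : ℕ => ((n : ℝ) + K + 1) ^ (-β)) := by
  have h := Real.summable_nat_rpow.2 (show -β < -1 by linarith)
  have h2 := (summable_nat_add_iff (f := fun n : ℕ => (n : ℝ) ^ (-β)) (K + 1)).2 h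
  convert h2 using 2 with n
  · rfl
  push_cast
  ring_nf

lemma tail_sum_le {β : ℝ} (hβ : 1 < β) (K : ℕ) :
    ∑' n : ℕ, ((n : ℝ) + K + 1) ^ (-β) ≤ 2 ^ β / (β - 1) * ((K : ℝ) + 1) ^ (1 - β) := by
  apply Real.tsum_le_of_sum_range_le (fun n => Real.rpow_nonneg (by positivity) _)
  intro n
  have hb1 : 0 < β - 1 := by linarith
  have hc : 0 < 2 ^ β / (β - 1) := by positivity
  calc ∑ i ∈ range n, ((i : ℝ) + K + 1) ^ (-β)
      ≤ ∑ i ∈ range n, 2 ^ β / (β - 1) *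
          (((i : ℝ) + K + 1) ^ (1 - β) - (((i : ℝ) + 1) + K + 1) ^ (1 - β)) := by
        apply Finset.sum_le_sum
        intro i _
        have := rpow_tail_step hβ (y := (i : ℝ) + K + 1) (by have h1 := Nat.cast_nonneg (α := ℝ) i; have h2 := Nat.cast_nonneg (α := ℝ) K; linarith)
        convert this using 4
        · rfl
        ring
    _ = 2 ^ β / (β - 1) *
          ∑ i ∈ range n, (((i : ℝ) + K + 1) ^ (1 - β) - (((i+1 : ℕ) : ℝ) + K + 1) ^ (1 - β)) := by
        rw [Finset.mul_sum]
        congr 1 with i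
        push_cast
        ring_nf
    _ ≤ 2 ^ β / (β - 1) * ((K : ℝ) + 1) ^ (1 - β) := by
        rw [Finset.sum_range_sub' (fun i => ((i : ℝ) + K + 1) ^ (1 - β))]
        apply mul_le_mul_of_nonneg_left _ (le_of_lt hc)
        simp only [Nat.cast_zero, zero_add]
        have : (0:ℝ) ≤ ((n : ℝ) + K + 1) ^ (1 - β) := Real.rpow_nonneg (by positivity) _
        linarith

/-- under the power-law decay `d_k = Θ(k^{−β})` (indexing `k ≥ 1` as `k+1`),
the effective dimension `N(t) = ∑_k d_k/(t + d_k)` satisfies `N(t) = Θ(t^{−1/β})` as `t → 0⁺`. -/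
theorem effective_dimension_theta (d : ℕ → ℝ) (β cl ch : ℝ)
    (hβ : 1 < β) (hcl : 0 < cl) (hch : 0 < ch)
    (hd : ∀ k : ℕ, cl * ((k : ℝ) + 1) ^ (-β) ≤ d k ∧ d k ≤ ch * ((k : ℝ) + 1) ^ (-β)) :
    ∃ a b t₀ : ℝ, 0 < a ∧ 0 < b ∧ 0 < t₀ ∧
      ∀ t : ℝ, 0 < t → t < t₀ →
        a * t ^ (-1 / β) ≤ (∑' k, d k / (t + d k)) ∧
        (∑' k, d k / (t + d k)) ≤ b * t ^ (-1 / β) := by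
  have hβ0 : 0 < β := by linarith
  have hβne : β ≠ 0 := ne_of_gt hβ0
  have hb1 : (0:ℝ) < β - 1 := by linarith
  have hcb : (0:ℝ) < 2 ^ β / (β - 1) := by positivity
  refine ⟨cl ^ (1/β) / 4, ch ^ (1/β) * (1 + 2 ^ β / (β - 1)), cl / 2 ^ β, by positivity,
    mul_pos (Real.rpow_pos_of_pos hch _) (by linarith), by positivity, ?_⟩
  intro t ht ht0
  have hd0 : ∀ n : ℕ, 0 < d n := fun n =>
    lt_of_lt_of_le (by positivity) (hd n).1
  have htd : ∀ n : ℕ, 0 < t + d n := fun n => by have := hd0 n; linarith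
  have hf0 : ∀ n : ℕ, 0 ≤ d n / (t + d n) := fun n =>
    div_nonneg (hd0 n).le (htd n).le
  have hf1 : ∀ n : ℕ, d n / (t + d n) ≤ 1 := fun n =>
    (div_le_one (htd n)).2 (by linarith)
  have hfd : ∀ n : ℕ, d n / (t + d n) ≤ ch / t * ((n : ℝ) + 1) ^ (-β) := by
    intro n
    have h1 : d n / (t + d n) ≤ d n / t :=
      div_le_div_of_nonneg_left (hd0 n).le ht (by have := hd0 n; linarith)
    calc d n / (t + d n) ≤ d n / t := h1
      _ ≤ ch * ((n : ℝ) + 1) ^ (-β) / t := by gcongr; exact (hd n).2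
      _ = ch / t * ((n : ℝ) + 1) ^ (-β) := by ring
  have hs1 : Summable (fun n : ℕ => ((n : ℝ) + 1) ^ (-β)) := by
    have := summable_shift hβ 0
    simpa using this
  have hsum : Summable (fun n : ℕ => d n / (t + d n)) :=
    Summable.of_nonneg_of_le hf0 hfd (hs1.mul_left _)
  -- rpow rewriting helper
  have hrw : ∀ c : ℝ, 0 < c → (c / t) ^ (1/β) = c ^ (1/β) * t ^ (-1/β) := by
    intro c hc
    rw [Real.div_rpow hc.le ht.le, neg_div, Real.rpow_neg ht.le, div_eq_mul_inv]
  constructor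
  · -- lower bound
    set x := (cl / t) ^ (1/β) with hxdef
    have hx0 : 0 < x := Real.rpow_pos_of_pos (div_pos hcl ht) _
    have hx2 : 2 < x := by
      have hlt : (2:ℝ) ^ β < cl / t := by
        rw [lt_div_iff₀ ht]
        exact (lt_div_iff₀' (by positivity : (0:ℝ) < 2 ^ β)).1 ht0
      have := Real.rpow_lt_rpow (by positivity) hlt (by positivity : (0:ℝ) < 1/β)
      calc (2:ℝ) = ((2:ℝ) ^ β) ^ (1/β) := by
            rw [← Real.rpow_mul (by norm_num), mul_one_div_cancel hβne, Real.rpow_one]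
        _ < x := this
    set K := ⌊x⌋₊ with hKdef
    have hK2 : 2 ≤ K := Nat.le_floor (by exact_mod_cast hx2.le)
    have hKx : (K : ℝ) ≤ x := Nat.floor_le hx0.le
    have hKpos : (0:ℝ) < K := by exact_mod_cast Nat.lt_of_lt_of_le two_pos hK2
    have hKb : (K : ℝ) ^ β ≤ cl / t := by
      have := Real.rpow_le_rpow hKpos.le hKx hβ0.le
      rwa [hxdef, ← Real.rpow_mul (div_pos hcl ht).le, one_div_mul_cancel hβne,
        Real.rpow_one] at this
    have hhalf : ∀ n ∈ Finset.range K, (1:ℝ)/2 ≤ d n / (t + d n) := by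
      intro n hn
      rw [Finset.mem_range] at hn
      have hn1 : ((n:ℝ) + 1) ≤ K := by exact_mod_cast Nat.succ_le_of_lt hn
      have h1 : (K:ℝ) ^ (-β) ≤ ((n:ℝ) + 1) ^ (-β) :=
        Real.rpow_le_rpow_of_nonpos (by positivity) hn1 (by linarith)
      have h2 : t ≤ cl * (K:ℝ) ^ (-β) := by
        rw [Real.rpow_neg hKpos.le, mul_comm, inv_mul_eq_div, le_div_iff₀ (by positivity)]
        calc t * (K:ℝ) ^ β ≤ t * (cl / t) := by
              exact mul_le_mul_of_nonneg_left hKb ht.le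
          _ = cl := by field_simp
      have h3 : t ≤ d n := le_trans h2 (le_trans
        (mul_le_mul_of_nonneg_left h1 hcl.le) (hd n).1)
      rw [le_div_iff₀ (htd n)]
      linarith
    have hsumK : (K : ℝ) * (1/2) ≤ ∑ n ∈ Finset.range K, d n / (t + d n) := by
      calc (K : ℝ) * (1/2) = ∑ _n ∈ Finset.range K, (1:ℝ)/2 := by
            simp [Finset.sum_const, mul_comm]
        _ ≤ _ := Finset.sum_le_sum hhalf
    have htsum : ∑ n ∈ Finset.range K, d n / (t + d n) ≤ ∑' n, d n / (t + d n) :=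
      Summable.sum_le_tsum _ (fun i _ => hf0 i) hsum
    have hxK1 : x < K + 1 := Nat.lt_floor_add_one x
    have : cl ^ (1/β) / 4 * t ^ (-1/β) = x / 4 := by
      rw [hxdef, hrw cl hcl]; ring
    rw [this]
    have : x / 4 ≤ (K : ℝ) * (1/2) := by
      have : (1:ℝ) ≤ K := by exact_mod_cast Nat.one_le_of_lt (Nat.lt_of_lt_of_le one_lt_two hK2)
      linarith
    linarith
  · -- upper bound
    set x := (ch / t) ^ (1/β) with hxdef
    have hct : 0 < ch / t := div_pos hch ht
    have hx0 : 0 < x := Real.rpow_pos_of_pos hct _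
    set K := ⌊x⌋₊ with hKdef
    have hKx : (K : ℝ) ≤ x := Nat.floor_le hx0.le
    have hxK1 : x ≤ (K : ℝ) + 1 := (Nat.lt_floor_add_one x).le
    have hsplit := Summable.sum_add_tsum_nat_add K hsum
    have hhead : ∑ n ∈ Finset.range K, d n / (t + d n) ≤ (K : ℝ) := by
      calc ∑ n ∈ Finset.range K, d n / (t + d n) ≤ ∑ _n ∈ Finset.range K, (1:ℝ) :=
            Finset.sum_le_sum (fun n _ => hf1 n)
        _ = K := by simp
    have hshift : Summable (fun n : ℕ => d (n + K) / (t + d (n + K))) :=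
      (summable_nat_add_iff (f := fun n => d n / (t + d n)) K).2 hsum
    have htail : (∑' n : ℕ, d (n + K) / (t + d (n + K)))
        ≤ ch / t * (2 ^ β / (β - 1) * ((K : ℝ) + 1) ^ (1 - β)) := by
      have hterm : ∀ n : ℕ, d (n + K) / (t + d (n + K))
          ≤ ch / t * (((n : ℝ) + K + 1) ^ (-β)) := by
        intro n
        have := hfd (n + K)
        convert this using 4
        push_cast
        ring
      calc (∑' n : ℕ, d (n + K) / (t + d (n + K)))
          ≤ ∑' n : ℕ, ch / t * (((n : ℝ) + K + 1) ^ (-β)) :=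
            Summable.tsum_le_tsum hterm hshift ((summable_shift hβ K).mul_left _)
        _ = ch / t * ∑' n : ℕ, ((n : ℝ) + K + 1) ^ (-β) := tsum_mul_left
        _ ≤ ch / t * (2 ^ β / (β - 1) * ((K : ℝ) + 1) ^ (1 - β)) :=
            mul_le_mul_of_nonneg_left (tail_sum_le hβ K) hct.le
    have hK1 : ((K : ℝ) + 1) ^ (1 - β) ≤ x ^ (1 - β) :=
      Real.rpow_le_rpow_of_nonpos hx0 hxK1 (by linarith)
    have hxx : ch / t * x ^ (1 - β) = x := by
      rw [hxdef, ← Real.rpow_mul hct.le]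
      calc ch / t * (ch / t) ^ (1/β * (1 - β))
          = (ch / t) ^ (1:ℝ) * (ch / t) ^ (1/β * (1 - β)) := by rw [Real.rpow_one]
        _ = (ch / t) ^ (1 + 1/β * (1 - β)) := (Real.rpow_add hct _ _).symm
        _ = (ch / t) ^ (1/β) := by
            congr 1
            field_simp
            ring
    have hfinal : (∑' n, d n / (t + d n)) ≤ (K : ℝ) + 2 ^ β / (β - 1) * x := by
      rw [← hsplit]
      have h2 : ch / t * (2 ^ β / (β - 1) * ((K : ℝ) + 1) ^ (1 - β))
          ≤ 2 ^ β / (β - 1) * x := by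
        calc ch / t * (2 ^ β / (β - 1) * ((K : ℝ) + 1) ^ (1 - β))
            ≤ ch / t * (2 ^ β / (β - 1) * x ^ (1 - β)) := by
              apply mul_le_mul_of_nonneg_left _ hct.le
              exact mul_le_mul_of_nonneg_left hK1 hcb.le
          _ = 2 ^ β / (β - 1) * (ch / t * x ^ (1 - β)) := by ring
          _ = 2 ^ β / (β - 1) * x := by rw [hxx]
      linarith [htail, hhead]
    have hbx : ch ^ (1/β) * (1 + 2 ^ β / (β - 1)) * t ^ (-1/β) = (1 + 2 ^ β / (β - 1)) * x := by
      rw [hxdef, hrw ch hch]; ring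
    rw [hbx]
    have : (K : ℝ) ≤ x := hKx
    nlinarith [hx0]
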